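/- Let X be a quandle, k a field, and A = k[X] its quandle algebra. Then the Lie transformation algebra 𝒯(A) — the smallest Lie subalgebra of End_k(A) (with bracket [f,g] = f∘g − g∘f) containing all operators L_a and R_a for a ∈ A — is contained in the k-linear span of all composites L_{a_1} ∘ ⋯ ∘ L_{a_m} ∘ R_{b_1} ∘ ⋯ ∘ R_{b_n} with a_i, b_j ∈ A and m + n ≥ 1 (all left multiplications appearing before all right multiplications). -/

import Mathlib

/-- The quandle algebra multiplication on `X →₀ k`, as a bilinear map,
determined on basis vectors by `e_x · e_y = e_{op x y}`. -/
noncomputable def qmul {k X : Type*} [Field k] (op : X → X → X) :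
    (X →₀ k) →ₗ[k] (X →₀ k) →ₗ[k] (X →₀ k) :=
  Finsupp.lsum k fun x =>
    LinearMap.toSpanSingleton k ((X →₀ k) →ₗ[k] (X →₀ k))
      (Finsupp.lsum k fun y =>
        LinearMap.toSpanSingleton k (X →₀ k) (Finsupp.single (op x y) (1 : k)))

/-- A derivation of the quandle algebra: a linear map satisfying the Leibniz rule. -/
def IsDerivation {k X : Type*} [Field k] (op : X → X → X)
    (D : (X →₀ k) →ₗ[k] (X →₀ k)) : Prop :=
  ∀ a b : X →₀ k, D (qmul op a b) = qmul op (D a) b + qmul op a (D b)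
attribute [local instance 100] LieRing.ofAssociativeRing
lemma qmul_single {k X : Type*} [Field k] (op : X → X → X) (x y : X) (s t : k) :
    qmul op (Finsupp.single x s) (Finsupp.single y t)
      = Finsupp.single (op x y) (s * t) := by
  simp [qmul, Finsupp.smul_single, mul_comm]

lemma qmul_key {k X : Type*} [Field k] {op : X → X → X}
    (distrib : ∀ x y z, op (op x y) z = op (op x z) (op y z)) (z : X)
    (a b : X →₀ k) :
    qmul op (qmul op a b) (Finsupp.single z 1)
      = qmul op (qmul op a (Finsupp.single z 1)) (qmul op b (Finsupp.single z 1)) := by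
  induction a using Finsupp.induction_linear with
  | zero => simp
  | add f g hf hg => simp only [map_add, LinearMap.add_apply]; rw [hf, hg]
  | single x s =>
    induction b using Finsupp.induction_linear with
    | zero => simp
    | add f g hf hg => simp only [map_add, LinearMap.add_apply]; rw [hf, hg]
    | single y t => rw [qmul_single, qmul_single, qmul_single, qmul_single, qmul_single, distrib]; ring_nf

section LR
variable {k X : Type*} [Field k] (op : X → X → X)

/-- Left multiplication operator. -/
noncomputable def Lop (a : X →₀ k) : Module.End k (X →₀ k) := qmul op a
/-- Right multiplication operator. -/
noncomputable def Rop (b : X →₀ k) : Module.End k (X →₀ k) := (qmul op).flip b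

noncomputable def Lprod (ls : List (X →₀ k)) : Module.End k (X →₀ k) := (ls.map (Lop op)).prod
noncomputable def Rprod (rs : List (X →₀ k)) : Module.End k (X →₀ k) := (rs.map (Rop op)).prod

lemma Lprod_cons (a : X →₀ k) (ls : List (X →₀ k)) :
    Lprod op (a :: ls) = Lop op a * Lprod op ls := by simp [Lprod]
lemma Rprod_cons (b : X →₀ k) (rs : List (X →₀ k)) :
    Rprod op (b :: rs) = Rop op b * Rprod op rs := by simp [Rprod]

variable {op}

lemma R_single_mul_L (distrib : ∀ x y z, op (op x y) z = op (op x z) (op y z)) (z : X) (a : X →₀ k) :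
    Rop op (Finsupp.single z 1) * Lop op a
      = Lop op (qmul op a (Finsupp.single z 1)) * Rop op (Finsupp.single z 1) :=
  LinearMap.ext fun b => qmul_key distrib z a b

lemma R_single_mul_R (distrib : ∀ x y z, op (op x y) z = op (op x z) (op y z)) (z : X) (b : X →₀ k) :
    Rop op (Finsupp.single z 1) * Rop op b
      = Rop op (qmul op b (Finsupp.single z 1)) * Rop op (Finsupp.single z 1) :=
  LinearMap.ext fun a => qmul_key distrib z a b

lemma pass_single_L (distrib : ∀ x y z, op (op x y) z = op (op x z) (op y z)) (z : X) : ∀ ls : List (X →₀ k),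
    Rop op (Finsupp.single z 1) * Lprod op ls
      = Lprod op (ls.map (fun a => qmul op a (Finsupp.single z 1))) * Rop op (Finsupp.single z 1)
  | [] => by simp [Lprod]
  | a :: ls => by
      rw [Lprod_cons, ← mul_assoc, R_single_mul_L distrib, mul_assoc,
        pass_single_L distrib z ls, ← mul_assoc, List.map_cons, Lprod_cons]

lemma pass_single_R (distrib : ∀ x y z, op (op x y) z = op (op x z) (op y z)) (z : X) : ∀ rs : List (X →₀ k),
    Rop op (Finsupp.single z 1) * Rprod op rs
      = Rprod op (rs.map (fun b => qmul op b (Finsupp.single z 1))) * Rop op (Finsupp.single z 1)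
  | [] => by simp [Rprod]
  | b :: rs => by
      rw [Rprod_cons, ← mul_assoc, R_single_mul_R distrib, mul_assoc,
        pass_single_R distrib z rs, ← mul_assoc, List.map_cons, Rprod_cons]

lemma Lprod_append (xs ys : List (X →₀ k)) :
    Lprod op (xs ++ ys) = Lprod op xs * Lprod op ys := by
  simp [Lprod, List.map_append, List.prod_append]
lemma Rprod_append (xs ys : List (X →₀ k)) :
    Rprod op (xs ++ ys) = Rprod op xs * Rprod op ys := by
  simp [Rprod, List.map_append, List.prod_append]

lemma Rop_single_smul (z : X) (t : k) :
    Rop op (Finsupp.single z t) = t • Rop op (Finsupp.single z 1) := by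
  rw [Rop, Rop, ← map_smul, Finsupp.smul_single, smul_eq_mul, mul_one]

/-- Passing a single right multiplication through a monomial. -/
lemma pass_single_mono (distrib : ∀ x y z, op (op x y) z = op (op x z) (op y z)) (z : X)
    (ls rs : List (X →₀ k)) :
    Rop op (Finsupp.single z 1) * (Lprod op ls * Rprod op rs)
      = Lprod op (ls.map (fun a => qmul op a (Finsupp.single z 1)))
        * Rprod op ((rs.map (fun b => qmul op b (Finsupp.single z 1))) ++ [Finsupp.single z 1]) := by
  rw [← mul_assoc, pass_single_L distrib, mul_assoc, pass_single_R distrib, Rprod_append]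
  simp [Rprod, mul_assoc]

lemma R_mul_mono (distrib : ∀ x y z, op (op x y) z = op (op x z) (op y z))
    (c : X →₀ k) (ls rs : List (X →₀ k)) :
    Rop op c * (Lprod op ls * Rprod op rs) ∈ Submodule.span k
      {g | ∃ ls' rs' : List (X →₀ k), ls'.length = ls.length ∧ rs'.length = rs.length + 1 ∧
        g = Lprod op ls' * Rprod op rs'} := by
  induction c using Finsupp.induction_linear with
  | zero => rw [Rop, map_zero]; simp
  | add f g hf hg => rw [Rop, map_add, add_mul]; exact add_mem hf hg
  | single z t =>
      rw [Rop_single_smul, smul_mul_assoc]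
      refine Submodule.smul_mem _ _ (Submodule.subset_span ?_)
      exact ⟨_, _, by simp, by simp, pass_single_mono distrib z ls rs⟩

lemma swap_mem (distrib : ∀ x y z, op (op x y) z = op (op x z) (op y z)) :
    ∀ (rs ls : List (X →₀ k)),
    Rprod op rs * Lprod op ls ∈ Submodule.span k
      {g | ∃ ls' rs' : List (X →₀ k), ls'.length = ls.length ∧ rs'.length = rs.length ∧
        g = Lprod op ls' * Rprod op rs'}
  | [], ls => Submodule.subset_span ⟨ls, [], rfl, rfl, by simp [Rprod]⟩
  | c :: rs, ls => by
      rw [Rprod_cons, mul_assoc]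
      have IH := swap_mem distrib rs ls
      have h2 : (LinearMap.mulLeft k (Rop op c)) (Rprod op rs * Lprod op ls) ∈
          Submodule.map (LinearMap.mulLeft k (Rop op c)) (Submodule.span k
            {g | ∃ ls' rs' : List (X →₀ k), ls'.length = ls.length ∧ rs'.length = rs.length ∧
              g = Lprod op ls' * Rprod op rs'}) := Submodule.mem_map_of_mem IH
      rw [← Submodule.span_image] at h2
      refine Submodule.span_le.mpr ?_ h2
      rintro - ⟨-, ⟨ls', rs', hl, hr, rfl⟩, rfl⟩
      have := R_mul_mono distrib c ls' rs'
      refine Submodule.span_le.mpr ?_ this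
      rintro - ⟨ls'', rs'', hl'', hr'', rfl⟩
      exact Submodule.subset_span ⟨ls'', rs'', by omega, by rw [List.length_cons]; omega, rfl⟩

/-- The set of LR-monomials. -/
def Sset (k' : Type*) [Field k'] (op : X → X → X) : Set (Module.End k' (X →₀ k')) :=
  {g | ∃ ls rs : List (X →₀ k'), 1 ≤ ls.length + rs.length ∧ g = Lprod op ls * Rprod op rs}

lemma mono_mul_mono (distrib : ∀ x y z, op (op x y) z = op (op x z) (op y z))
    (ls rs ls' rs' : List (X →₀ k)) (h : 1 ≤ ls.length + rs.length) :
    (Lprod op ls * Rprod op rs) * (Lprod op ls' * Rprod op rs')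
      ∈ Submodule.span k (Sset k op) := by
  have key : (Lprod op ls * Rprod op rs) * (Lprod op ls' * Rprod op rs')
      = Lprod op ls * ((Rprod op rs * Lprod op ls') * Rprod op rs') := by
    rw [mul_assoc, ← mul_assoc (Rprod op rs)]
  rw [key]
  set φ : Module.End k (X →₀ k) →ₗ[k] Module.End k (X →₀ k) :=
    (LinearMap.mulLeft k (Lprod op ls)).comp (LinearMap.mulRight k (Rprod op rs')) with hφ
  have h2 : φ (Rprod op rs * Lprod op ls') ∈ Submodule.map φ (Submodule.span k
      {g | ∃ ls'' rs'' : List (X →₀ k), ls''.length = ls'.length ∧ rs''.length = rs.length ∧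
        g = Lprod op ls'' * Rprod op rs''}) :=
    Submodule.mem_map_of_mem (swap_mem distrib rs ls')
  rw [← Submodule.span_image] at h2
  have h3 : φ (Rprod op rs * Lprod op ls')
      = Lprod op ls * ((Rprod op rs * Lprod op ls') * Rprod op rs') := by
    simp [hφ, LinearMap.mulLeft_apply, LinearMap.mulRight_apply, mul_assoc]
  rw [← h3]
  refine Submodule.span_le.mpr ?_ h2
  rintro - ⟨-, ⟨ls'', rs'', hl, hr, rfl⟩, rfl⟩
  refine Submodule.subset_span ⟨ls ++ ls'', rs'' ++ rs', ?_, ?_⟩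
  · simp only [List.length_append]; omega
  · simp [hφ, LinearMap.mulLeft_apply, LinearMap.mulRight_apply, Lprod_append, Rprod_append,
      mul_assoc]

lemma S_mul_mem (distrib : ∀ x y z, op (op x y) z = op (op x z) (op y z))
    {f g : Module.End k (X →₀ k)} (hf : f ∈ Submodule.span k (Sset k op))
    (hg : g ∈ Submodule.span k (Sset k op)) : f * g ∈ Submodule.span k (Sset k op) := by
  have hle : Submodule.span k (Sset k op) * Submodule.span k (Sset k op)
      ≤ Submodule.span k (Sset k op) := by
    rw [Submodule.span_mul_span k (Sset k op) (Sset k op)]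
    refine Submodule.span_le.mpr ?_
    rintro - ⟨-, ⟨ls, rs, h1, rfl⟩, -, ⟨ls', rs', h2, rfl⟩, rfl⟩
    exact mono_mul_mono distrib ls rs ls' rs' h1
  exact hle (Submodule.mul_mem_mul hf hg)

end LR

lemma Sset_eq_finset {k X : Type*} [Field k] (op : X → X → X) :
    Sset k op = {g : Module.End k (X →₀ k) | ∃ (m n : ℕ), 1 ≤ m + n ∧
      ∃ (as : Fin m → (X →₀ k)) (bs : Fin n → (X →₀ k)),
        g = (List.ofFn fun i => (qmul op (as i) : Module.End k (X →₀ k))).prod *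
            (List.ofFn fun j => ((qmul op).flip (bs j) : Module.End k (X →₀ k))).prod} := by
  ext g
  constructor
  · rintro ⟨ls, rs, h, rfl⟩
    refine ⟨ls.length, rs.length, h, ls.get, rs.get, ?_⟩
    rw [Lprod, Rprod]
    congr 1
    · rw [show (fun i => (qmul op (ls.get i) : Module.End k (X →₀ k))) = (Lop op) ∘ ls.get
        from rfl, ← List.map_ofFn, List.ofFn_get]
    · rw [show (fun j => ((qmul op).flip (rs.get j) : Module.End k (X →₀ k))) = (Rop op) ∘ rs.get
        from rfl, ← List.map_ofFn, List.ofFn_get]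
  · rintro ⟨m, n, h, as, bs, rfl⟩
    refine ⟨List.ofFn as, List.ofFn bs, by simpa using h, ?_⟩
    rw [Lprod, Rprod, List.map_ofFn, List.map_ofFn]
    rfl


/-- The Lie transformation algebra of the quandle algebra `k[X]` — the smallest Lie subalgebra
of the endomorphism algebra containing all left and right multiplication operators — is contained
in the linear span of the composites `L_{a_1} ∘ ⋯ ∘ L_{a_m} ∘ R_{b_1} ∘ ⋯ ∘ R_{b_n}` with
`m + n ≥ 1`. -/
theorem lie_transformation_in_LR_span {k X : Type*} [Field k] (op : X → X → X)
    (idem : ∀ x, op x x = x)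
    (rbij : ∀ y, Function.Bijective fun x => op x y)
    (distrib : ∀ x y z, op (op x y) z = op (op x z) (op y z)) :
    ∀ f ∈ LieSubalgebra.lieSpan k (Module.End k (X →₀ k))
        ({g | ∃ a : X →₀ k, g = qmul op a} ∪ {g | ∃ a : X →₀ k, g = (qmul op).flip a}),
      f ∈ Submodule.span k
        {g : Module.End k (X →₀ k) | ∃ (m n : ℕ), 1 ≤ m + n ∧
          ∃ (as : Fin m → (X →₀ k)) (bs : Fin n → (X →₀ k)),
            g = (List.ofFn fun i => (qmul op (as i) : Module.End k (X →₀ k))).prod *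
                (List.ofFn fun j => ((qmul op).flip (bs j) : Module.End k (X →₀ k))).prod} := by
  intro f hf
  rw [← Sset_eq_finset]
  let S' : LieSubalgebra k (Module.End k (X →₀ k)) :=
    { Submodule.span k (Sset k op) with
      lie_mem' := fun {x y} hx hy => by
        rw [Ring.lie_def]
        exact Submodule.sub_mem (Submodule.span k (Sset k op)) (S_mul_mem distrib hx hy) (S_mul_mem distrib hy hx) }
  have hle : LieSubalgebra.lieSpan k (Module.End k (X →₀ k))
      ({g | ∃ a : X →₀ k, g = qmul op a} ∪ {g | ∃ a : X →₀ k, g = (qmul op).flip a}) ≤ S' := by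
    rw [LieSubalgebra.lieSpan_le]
    rintro g (⟨a, rfl⟩ | ⟨a, rfl⟩)
    · exact Submodule.subset_span ⟨[a], [], by simp, by simp [Lprod, Rprod]; rfl⟩
    · exact Submodule.subset_span ⟨[], [a], by simp, by simp [Lprod, Rprod]; rfl⟩
  exact hle hf
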